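/- Let F be an ordered field in which every element has an integer part with respect to a discretely ordered subring M (i.e., M ⊆^{IP} F), and let K be the field of equivalence classes of M-indexed Cauchy sequences from F (Cauchy completion with moduli indexed by M^+). Then M is an integer part of K: every Cauchy class a has m ∈ M with m ≤ a < m + 1. -/

import Mathlib

section

variable {M F : Type*} [CommRing M] [LinearOrder M] [IsStrictOrderedRing M]
  [Field F] [LinearOrder F] [IsStrictOrderedRing F]

/-- `a : M⁺ → F` is an `M`-Cauchy sequence (indices range over nonnegative
elements of `M`, embedded into `F` via `f`). -/
def MCauchy (f : M →+* F) (a : M → F) : Prop :=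
  ∀ k : M, 0 < k → ∃ N : M, 0 ≤ N ∧ ∀ n m : M, N < n → N < m →
    |a n - a m| < 1 / f k

/-- Strict order on (representatives of) classes of `M`-Cauchy sequences. -/
def MSeqLt (f : M →+* F) (a b : M → F) : Prop :=
  ∃ k : M, 0 < k ∧ ∃ N : M, 0 ≤ N ∧ ∀ n : M, N < n → a n + 1 / f k < b n

/-- Equivalence of `M`-Cauchy sequences. -/
def MSeqEquiv (f : M →+* F) (a b : M → F) : Prop :=
  ∀ k : M, 0 < k → ∃ N : M, 0 ≤ N ∧ ∀ n : M, N < n → |a n - b n| < 1 / f k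

/-- If the discretely ordered ring `M` is an integer part of its ordered quotient
field `F` (realized by an order-preserving embedding `f : M →+* F` whose
quotients exhaust `F`), then `M` is an integer part of the `M`-indexed Cauchy
completion `K` of `F`: for every `M`-Cauchy sequence `a` there is `m ∈ M` with
`m ≤ [a] < m + 1` in the order of `K`. -/
theorem stmt17 (f : M →+* F) (hf : StrictMono f)
    (hdisc : ∀ m : M, 0 < m → 1 ≤ m)
    (hquot : ∀ r : F, ∃ n k : M, 0 < k ∧ r = f n / f k)
    (hIP : ∀ r : F, ∃ m : M, f m ≤ r ∧ r < f m + 1)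
    (a : M → F) (ha : MCauchy f a) :
    ∃ m : M, (MSeqLt f (fun _ => f m) a ∨ MSeqEquiv f (fun _ => f m) a) ∧
      MSeqLt f a (fun _ => f m + 1) := by
  have hfpos : ∀ k : M, 0 < k → (0 : F) < f k := by
    intro k hk
    have := hf hk
    simpa using this
  obtain ⟨N, hN0, hN⟩ := ha 8 (by norm_num)
  have h8 : f (8 : M) = (8 : F) := map_ofNat f 8
  set c := a (N + 1) with hc
  have hNlt : N < N + 1 := by linarith [show (0:M) < 1 from one_pos]
  have hN8 : ∀ n, N < n → |a n - c| < 1/8 := by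
    intro n hn
    have := hN n (N + 1) hn hNlt
    rwa [h8] at this
  obtain ⟨m₁, hm₁, hm₁'⟩ := hIP (c + 1/2)
  -- so f m₁ - 1/2 ≤ c < f m₁ + 1/2
  have hcl : f m₁ - 1/2 ≤ c := by linarith
  have hcu : c < f m₁ + 1/2 := by linarith
  have hfm1sub : f (m₁ - 1) = f m₁ - 1 := by rw [map_sub, map_one]
  by_cases hB : c < f m₁ - 1/4
  · -- a stays in (f m₁ - 5/8, f m₁ - 1/8): use m₁ - 1
    refine ⟨m₁ - 1, Or.inl ⟨4, by norm_num, N, hN0, ?_⟩, 16, by norm_num, N, hN0, ?_⟩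
    · intro n hn
      have h := abs_lt.mp (hN8 n hn)
      rw [hfm1sub, map_ofNat]
      linarith [h.1]
    · intro n hn
      have h := abs_lt.mp (hN8 n hn)
      rw [hfm1sub, map_ofNat]
      linarith [h.2]
  by_cases hC : f m₁ + 1/4 < c
  · -- a stays in (f m₁ + 1/8, f m₁ + 5/8): use m₁
    refine ⟨m₁, Or.inl ⟨8, by norm_num, N, hN0, ?_⟩, 4, by norm_num, N, hN0, ?_⟩
    · intro n hn
      have h := abs_lt.mp (hN8 n hn)
      rw [map_ofNat]
      linarith [h.1]
    · intro n hn
      have h := abs_lt.mp (hN8 n hn)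
      rw [map_ofNat]
      linarith [h.2]
  -- now f m₁ - 1/4 ≤ c ≤ f m₁ + 1/4, so |a n - f m₁| < 3/8 for n > N
  push_neg at hB hC
  have hnear : ∀ n, N < n → f m₁ - 3/8 < a n ∧ a n < f m₁ + 3/8 := by
    intro n hn
    have h := abs_lt.mp (hN8 n hn)
    constructor <;> linarith [h.1, h.2]
  by_cases heq : MSeqEquiv f (fun _ => f m₁) a
  · refine ⟨m₁, Or.inr heq, ?_⟩
    obtain ⟨N₂, hN₂0, hN₂⟩ := heq 2 (by norm_num)
    refine ⟨4, by norm_num, N₂, hN₂0, ?_⟩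
    intro n hn
    have h := hN₂ n hn
    simp only [map_ofNat] at h ⊢
    have h' := abs_lt.mp h
    linarith [h'.1]
  · unfold MSeqEquiv at heq
    push_neg at heq
    obtain ⟨k₀, hk₀, hfreq⟩ := heq
    have hx : (0 : F) < f k₀ := hfpos k₀ hk₀
    obtain ⟨N₃, hN₃0, hN₃⟩ := ha (2 * k₀) (by positivity)
    set N₄ := max N N₃ with hN₄
    have hN₄0 : 0 ≤ N₄ := le_trans hN0 (le_max_left _ _)
    obtain ⟨n₁, hn₁, hge⟩ := hfreq N₄ hN₄0
    have hf2k : f (2 * k₀) = 2 * f k₀ := by rw [map_mul, map_ofNat]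
    have key : ∀ n, N₄ < n → |a n - a n₁| < 1 / (2 * f k₀) := by
      intro n hn
      have := hN₃ n n₁ (lt_of_le_of_lt (le_max_right _ _) hn)
        (lt_of_le_of_lt (le_max_right _ _) hn₁)
      rwa [hf2k] at this
    rcases le_abs.mp hge with hbelow | habove
    · -- a n₁ ≤ f m₁ - 1/f k₀ : use m₁ - 1
      refine ⟨m₁ - 1, Or.inl ⟨2, by norm_num, N, hN0, ?_⟩,
        4 * k₀, by positivity, N₄, hN₄0, ?_⟩
      · intro n hn
        have h := (hnear n hn).1
        rw [hfm1sub, map_ofNat]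
        linarith
      · intro n hn
        have h := abs_lt.mp (key n hn)
        have h4 : f (4 * k₀) = 4 * f k₀ := by rw [map_mul, map_ofNat]
        rw [hfm1sub, h4]
        have e1 : 1 / (4 * f k₀) + 1 / (4 * f k₀) = 1 / (2 * f k₀) := by
          rw [← add_div, div_eq_div_iff (by positivity) (by positivity)]; ring
        have e2 : 1 / (2 * f k₀) + 1 / (2 * f k₀) = 1 / f k₀ := by
          rw [← add_div, div_eq_div_iff (by positivity) hx.ne']; ring
        have h14 : (0:F) < 1 / (4 * f k₀) := by positivity
        linarith [h.2]
    · -- f m₁ + 1/f k₀ ≤ a n₁ : use m₁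
      refine ⟨m₁, Or.inl ⟨2 * k₀, by positivity, N₄, hN₄0, ?_⟩,
        2, by norm_num, N, hN0, ?_⟩
      · intro n hn
        have h := abs_lt.mp (key n hn)
        rw [hf2k]
        have e2 : 1 / (2 * f k₀) + 1 / (2 * f k₀) = 1 / f k₀ := by
          rw [← add_div, div_eq_div_iff (by positivity) hx.ne']; ring
        linarith [h.1]
      · intro n hn
        have h := (hnear n hn).2
        rw [map_ofNat]
        linarith

end
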